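/- Let m ≥ 2 and let c, n be natural numbers with (c+1)·(m−1) ≤ n. Let A be the set of vectors x = (x_1,…,x_m) ∈ ℕ^m with x_1 + ⋯ + x_m = n such that there exists an index w with x_i − x_w ≥ c + 1 for every i ≠ w. Then |A| / C(n+m−1, m−1) ≥ ((n − (c+1)(m−1) + 1)/(mn − (c+1)(m−1)))^{(c+1)(m−1)}. -/

import Mathlib

open Finset

/-- The set of good profiles is finite. -/
lemma vetoA_finite (m c n : ℕ) :
    ({x : Fin m → ℕ | (∑ i, x i) = n ∧
      ∃ w : Fin m, ∀ i : Fin m, i ≠ w → x w + c + 1 ≤ x i}).Finite := by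
  apply Set.Finite.subset (Set.Finite.pi (fun _ : Fin m => Set.finite_Iic n))
  intro x hx
  simp only [Set.mem_pi, Set.mem_univ, Set.mem_Iic, forall_true_left]
  intro i
  exact hx.1 ▸ Finset.single_le_sum (f := x) (fun j _ => Nat.zero_le _) (Finset.mem_univ i)

/-- Existence of a minimizer. -/
lemma veto_exists_min (m : ℕ) (hm : 0 < m) (y : Fin m → ℕ) : ∃ w, ∀ i, y w ≤ y i := by
  obtain ⟨w, -, hw⟩ := Finset.exists_min_image Finset.univ y ⟨⟨0, hm⟩, Finset.mem_univ _⟩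
  exact ⟨w, fun i => hw i (Finset.mem_univ i)⟩

/-- Lower bound on the number of good profiles: stars and bars injection. -/
lemma vetoA_card_lb (m c s : ℕ) (hm : 2 ≤ m) :
    (s + m - 1).choose (m - 1) ≤
    ({x : Fin m → ℕ | (∑ i, x i) = s + (c + 1) * (m - 1) ∧
      ∃ w : Fin m, ∀ i : Fin m, i ≠ w → x w + c + 1 ≤ x i}).ncard := by
  classical
  set A := {x : Fin m → ℕ | (∑ i, x i) = s + (c + 1) * (m - 1) ∧
      ∃ w : Fin m, ∀ i : Fin m, i ≠ w → x w + c + 1 ≤ x i} with hA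
  have hm0 : 0 < m := by omega
  -- minimizer selector
  let wsel : (Fin m → ℕ) → Fin m := fun y => (veto_exists_min m hm0 y).choose
  have hws : ∀ (y : Fin m → ℕ) (i : Fin m), y (wsel y) ≤ y i :=
    fun y => (veto_exists_min m hm0 y).choose_spec
  -- the map adding c+1 vetoes to all non-minimal candidates
  let g : (Fin m → ℕ) → (Fin m → ℕ) := fun y i => y i + if i = wsel y then 0 else c + 1
  have hginj : Function.Injective g := by
    intro y y' h
    have hweq : wsel y = wsel y' := by
      by_contra hne
      have h1 := congrFun h (wsel y)
      have h2 := congrFun h (wsel y')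
      have e1 : g y (wsel y) = y (wsel y) := by simp [g]
      have e2 : g y' (wsel y) = y' (wsel y) + (c + 1) := by
        simp [g, if_neg hne]
      have e3 : g y (wsel y') = y (wsel y') + (c + 1) := by
        simp only [g]
        rw [if_neg (Ne.symm hne)]
      have e4 : g y' (wsel y') = y' (wsel y') := by simp [g]
      have m1 := hws y (wsel y')
      have m2 := hws y' (wsel y)
      omega
    funext i
    have hi := congrFun h i
    by_cases hc : i = wsel y
    · simpa [g, hc, hweq] using hi
    · have hc' : i ≠ wsel y' := hweq ▸ hc
      simpa [g, if_neg hc, if_neg hc'] using hi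
  -- from multisets to count vectors
  let f : Sym (Fin m) s → (Fin m → ℕ) :=
    fun M => g (fun i => Multiset.count i (M : Multiset (Fin m)))
  have hcntinj : Function.Injective
      (fun M : Sym (Fin m) s => (fun i => Multiset.count i (M : Multiset (Fin m)))) := by
    intro M N h
    exact Sym.coe_injective (Multiset.ext.mpr (fun a => congrFun h a))
  have hfinj : Function.Injective f := hginj.comp hcntinj
  -- sum of the g-image
  have hgsum : ∀ y : Fin m → ℕ, (∑ i, g y i) = (∑ i, y i) + (m - 1) * (c + 1) := by
    intro y
    have h1 : (∑ i, g y i) = (∑ i, y i) + ∑ i, (if i = wsel y then 0 else c + 1) := by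
      simp [g, Finset.sum_add_distrib]
    have h2 : (∑ i, (if i = wsel y then 0 else c + 1)) = (m - 1) * (c + 1) := by
      rw [← Finset.add_sum_erase Finset.univ _ (Finset.mem_univ (wsel y))]
      rw [if_pos rfl, zero_add]
      rw [Finset.sum_congr rfl (fun i hi => if_neg (Finset.ne_of_mem_erase hi))]
      simp [Finset.card_erase_of_mem, mul_comm]
    omega
  -- sum of counts equals s
  have hcsum : ∀ M : Sym (Fin m) s, (∑ i, Multiset.count i (M : Multiset (Fin m))) = s := by
    intro M
    have h1 : (∑ i ∈ (M : Multiset (Fin m)).toFinset, Multiset.count i (M : Multiset (Fin m)))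
        = (∑ i, Multiset.count i (M : Multiset (Fin m))) := by
      apply Finset.sum_subset (Finset.subset_univ _)
      intro x _ hx
      exact Multiset.count_eq_zero.mpr (by simpa using hx)
    rw [← h1, Multiset.toFinset_sum_count_eq]
    exact M.2
  -- range of f is inside A
  have hrange : Set.range f ⊆ A := by
    rintro x ⟨M, rfl⟩
    set y : Fin m → ℕ := fun i => Multiset.count i (M : Multiset (Fin m)) with hy
    refine ⟨?_, ?_⟩
    · show (∑ i, g y i) = s + (c + 1) * (m - 1)
      have hys : (∑ i, y i) = s := by simpa [hy] using hcsum M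
      have h1 := hgsum y
      have hcm : (m - 1) * (c + 1) = (c + 1) * (m - 1) := mul_comm _ _
      omega
    · refine ⟨wsel y, fun i hi => ?_⟩
      have e1 : g y (wsel y) = y (wsel y) := by simp [g]
      have e2 : g y i = y i + (c + 1) := by
        simp only [g]
        rw [if_neg hi]
      have := hws y i
      show g y (wsel y) + c + 1 ≤ g y i
      omega
  -- conclude
  have hcard : (s + m - 1).choose (m - 1) = Nat.card (Sym (Fin m) s) := by
    rw [Nat.card_eq_fintype_card, Sym.card_sym_eq_choose, Fintype.card_fin]
    rw [add_comm m s]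
    rw [← Nat.choose_symm (show s ≤ s + m - 1 by omega)]
    congr 1
    omega
  rw [hcard]
  rw [← Nat.card_range_of_injective hfinj, Nat.card_coe_set_eq]
  exact Set.ncard_le_ncard hrange (vetoA_finite m c _)

/-- Binomial recurrence step. -/
lemma veto_choose_step (d t : ℕ) :
    (t + d + 1).choose d * (t + 1) = (t + d).choose d * (t + d + 1) := by
  have h := Nat.add_one_mul_choose_eq (t + d) t
  have e1 : (t + d).choose t = (t + d).choose d := by
    rw [← Nat.choose_symm (Nat.le_add_right t d), Nat.add_sub_cancel_left]
  have e2 : (t + d + 1).choose (t + 1) = (t + d + 1).choose d := by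
    rw [← Nat.choose_symm (show t + 1 ≤ t + d + 1 by omega)]
    congr 1
    omega
  calc (t + d + 1).choose d * (t + 1) = (t + d + 1).choose (t + 1) * (t + 1) := by rw [e2]
    _ = (t + d).succ * (t + d).choose t := h.symm
    _ = (t + d).choose d * (t + d + 1) := by rw [e1, Nat.succ_eq_add_one]; ring

/-- Telescoping identity for binomials. -/
lemma veto_choose_identity (d n k : ℕ) (hk : k ≤ n) :
    (n + d).choose d * ∏ j ∈ Finset.range k, (n - j) =
    (n - k + d).choose d * ∏ j ∈ Finset.range k, (n + d - j) := by
  induction k with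
  | zero => simp
  | succ k ih =>
    have hk' : k ≤ n := by omega
    obtain ⟨t, hteq⟩ : ∃ t, n - k = t + 1 := ⟨n - (k + 1), by omega⟩
    have h1 : n - (k + 1) = t := by omega
    have h2 : n + d - k = t + d + 1 := by omega
    have key := veto_choose_step d t
    calc (n + d).choose d * ∏ j ∈ Finset.range (k + 1), (n - j)
        = ((n + d).choose d * ∏ j ∈ Finset.range k, (n - j)) * (t + 1) := by
          rw [Finset.prod_range_succ, hteq]; ring
      _ = ((n - k + d).choose d * ∏ j ∈ Finset.range k, (n + d - j)) * (t + 1) := by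
          rw [ih hk']
      _ = ((t + d + 1).choose d * (t + 1)) * ∏ j ∈ Finset.range k, (n + d - j) := by
          rw [hteq, show t + 1 + d = t + d + 1 from by omega]; ring
      _ = ((t + d).choose d * (t + d + 1)) * ∏ j ∈ Finset.range k, (n + d - j) := by
          rw [key]
      _ = (n - (k + 1) + d).choose d * ∏ j ∈ Finset.range (k + 1), (n + d - j) := by
          rw [Finset.prod_range_succ, h1, h2]; ring

/-- Factor-wise inequality in clean variables. -/
lemma veto_factor (e N a b : ℕ) (he : 1 ≤ e) (hN : 2 ≤ N) (hba : b + 1 ≤ a) (haN : a ≤ N) :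
    (b + 1) * (a + e) ≤ (e * N + b) * a := by
  have h1 : (b + 1) * e ≤ a * e := Nat.mul_le_mul_right e hba
  have h2 : 1 + e ≤ e * N := by
    calc 1 + e ≤ e * 2 := by omega
      _ ≤ e * N := Nat.mul_le_mul_left e hN
  have h3 : a * (1 + e) ≤ a * (e * N) := Nat.mul_le_mul_left a h2
  calc (b + 1) * (a + e) = b * a + a + (b + 1) * e := by ring
    _ ≤ b * a + a + a * e := by omega
    _ = b * a + a * (1 + e) := by ring
    _ ≤ b * a + a * (e * N) := by omega
    _ = (e * N + b) * a := by ring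

/-- Main counting inequality for `n ≥ 2`. -/
lemma veto_main_ineq (m n k : ℕ) (hm : 2 ≤ m) (hn : 2 ≤ n) (hk : k ≤ n) :
    (n - k + 1) ^ k * (n + m - 1).choose (m - 1) ≤
    (m * n - k) ^ k * (n - k + m - 1).choose (m - 1) := by
  set d := m - 1 with hd
  have hnm1 : n + m - 1 = n + d := by omega
  have hnkm1 : n - k + m - 1 = n - k + d := by omega
  rw [hnm1, hnkm1]
  have hmn : d * n + n = m * n := by
    have h : d + 1 = m := by omega
    calc d * n + n = (d + 1) * n := by ring
      _ = m * n := by rw [h]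
  have hP1pos : 0 < ∏ j ∈ Finset.range k, (n - j) :=
    Finset.prod_pos (fun j hj => by have := Finset.mem_range.mp hj; omega)
  have key : (n - k + 1) ^ k * ∏ j ∈ Finset.range k, (n + d - j) ≤
      (m * n - k) ^ k * ∏ j ∈ Finset.range k, (n - j) := by
    have l1 : (n - k + 1) ^ k = ∏ _j ∈ Finset.range k, (n - k + 1) := by
      rw [Finset.prod_const, Finset.card_range]
    have l2 : (m * n - k) ^ k = ∏ _j ∈ Finset.range k, (m * n - k) := by
      rw [Finset.prod_const, Finset.card_range]
    rw [l1, l2, ← Finset.prod_mul_distrib, ← Finset.prod_mul_distrib]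
    apply Finset.prod_le_prod'
    intro j hj
    have hjk : j < k := Finset.mem_range.mp hj
    have e1 : n + d - j = (n - j) + d := by omega
    have e2 : m * n - k = d * n + (n - k) := by
      rw [← hmn, Nat.add_sub_assoc hk]
    rw [e1, e2]
    exact veto_factor d n (n - j) (n - k) (by omega) hn (by omega) (by omega)
  apply Nat.le_of_mul_le_mul_right _ hP1pos
  calc (n - k + 1) ^ k * (n + d).choose d * ∏ j ∈ Finset.range k, (n - j)
      = (n - k + 1) ^ k * ((n + d).choose d * ∏ j ∈ Finset.range k, (n - j)) := by ring
    _ = (n - k + 1) ^ k * ((n - k + d).choose d * ∏ j ∈ Finset.range k, (n + d - j)) := by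
        rw [veto_choose_identity d n k hk]
    _ = (n - k + d).choose d * ((n - k + 1) ^ k * ∏ j ∈ Finset.range k, (n + d - j)) := by ring
    _ ≤ (n - k + d).choose d * ((m * n - k) ^ k * ∏ j ∈ Finset.range k, (n - j)) :=
        Nat.mul_le_mul_left _ key
    _ = (m * n - k) ^ k * (n - k + d).choose d * ∏ j ∈ Finset.range k, (n - j) := by ring

/-- For veto with `m ≥ 2` candidates, `n` voters and coalition size `c` with
`(c+1)(m-1) ≤ n`, the fraction of scoring profiles in which some candidate has at least
`c + 1` fewer vetoes than every other candidate is at least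
`((n - (c+1)(m-1) + 1)/(mn - (c+1)(m-1)))^((c+1)(m-1))`. -/
theorem veto_collusion_proof_fraction (m c n : ℕ) (hm : 2 ≤ m)
    (hcn : (c + 1) * (m - 1) ≤ n) :
    (((n : ℝ) - ((c + 1) * (m - 1) : ℕ) + 1) /
        ((m : ℝ) * (n : ℝ) - ((c + 1) * (m - 1) : ℕ))) ^ ((c + 1) * (m - 1)) ≤
      (({x : Fin m → ℕ | (∑ i, x i) = n ∧
          ∃ w : Fin m, ∀ i : Fin m, i ≠ w → x w + c + 1 ≤ x i}).ncard : ℝ) /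
        (Nat.choose (n + m - 1) (m - 1) : ℝ) := by
  have hk1 : 1 ≤ (c + 1) * (m - 1) := Nat.one_le_iff_ne_zero.mpr
    (Nat.mul_ne_zero (by omega) (by omega))
  set k := (c + 1) * (m - 1) with hkdef
  have hkn : k ≤ n := hcn
  have hn1 : 1 ≤ n := le_trans hk1 hkn
  have hAfin := vetoA_finite m c n
  have hchoosepos : 0 < (n + m - 1).choose (m - 1) := Nat.choose_pos (by omega)
  have h2n : 2 * n ≤ m * n := Nat.mul_le_mul_right n hm
  have hkmn : k < m * n := lt_of_lt_of_le (show k < 2 * n by omega) h2n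
  -- cast rewriting
  have cast1 : (n : ℝ) - (k : ℕ) + 1 = ((n - k + 1 : ℕ) : ℝ) := by
    push_cast [Nat.cast_sub hkn]
    ring
  have cast2 : (m : ℝ) * (n : ℝ) - (k : ℕ) = ((m * n - k : ℕ) : ℝ) := by
    push_cast [Nat.cast_sub (le_of_lt hkmn)]
    ring
  rw [cast1, cast2, div_pow]
  have hbpos : (0 : ℝ) < ((m * n - k : ℕ) : ℝ) ^ k := by
    apply pow_pos
    exact_mod_cast Nat.sub_pos_of_lt hkmn
  have hcpos : (0 : ℝ) < ((n + m - 1).choose (m - 1) : ℝ) := by exact_mod_cast hchoosepos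
  rw [div_le_div_iff₀ hbpos hcpos]
  rcases eq_or_lt_of_le hn1 with hn1' | hn2
  · -- n = 1 forces k = 1, m = 2, c = 0
    have hn : n = 1 := hn1'.symm
    subst hn
    have hk : k = 1 := by omega
    have hk' : (c + 1) * (m - 1) = 1 := hkdef ▸ hk
    have hd1 : (m - 1) ∣ 1 := ⟨c + 1, by rw [mul_comm]; exact hk'.symm⟩
    have hd2 : (c + 1) ∣ 1 := ⟨m - 1, hk'.symm⟩
    have hm' : m - 1 = 1 := Nat.dvd_one.mp hd1
    have hc' : c + 1 = 1 := Nat.dvd_one.mp hd2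
    have hc0 : c = 0 := by omega
    have hm2 : m = 2 := by omega
    subst hc0; subst hm2
    have hk1' : k = 1 := hk
    -- the two good profiles
    have hmem1 : (![1, 0] : Fin 2 → ℕ) ∈ {x : Fin 2 → ℕ | (∑ i, x i) = 1 ∧
        ∃ w : Fin 2, ∀ i : Fin 2, i ≠ w → x w + 0 + 1 ≤ x i} := by
      constructor
      · simp [Fin.sum_univ_two]
      · exact ⟨1, by decide⟩
    have hmem2 : (![0, 1] : Fin 2 → ℕ) ∈ {x : Fin 2 → ℕ | (∑ i, x i) = 1 ∧
        ∃ w : Fin 2, ∀ i : Fin 2, i ≠ w → x w + 0 + 1 ≤ x i} := by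
      constructor
      · simp [Fin.sum_univ_two]
      · exact ⟨0, by decide⟩
    have hne : (![1, 0] : Fin 2 → ℕ) ≠ ![0, 1] := by
      intro h
      have := congrFun h 0
      simp at this
    have hcard2 : 2 ≤ ({x : Fin 2 → ℕ | (∑ i, x i) = 1 ∧
        ∃ w : Fin 2, ∀ i : Fin 2, i ≠ w → x w + 0 + 1 ≤ x i}).ncard := by
      exact (Set.one_lt_ncard_iff hAfin).mpr ⟨_, _, hmem1, hmem2, hne⟩
    rw [hk1']
    have hch : (1 + 2 - 1).choose (2 - 1) = 2 := by decide
    rw [hch]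
    norm_num
    norm_num at hcard2
    exact_mod_cast hcard2
  · -- main case n ≥ 2
    have heq : (n - k) + (c + 1) * (m - 1) = n := by rw [← hkdef]; omega
    have hlb := vetoA_card_lb m c (n - k) hm
    rw [heq] at hlb
    have hnat : (n - k + 1) ^ k * (n + m - 1).choose (m - 1) ≤
        ({x : Fin m → ℕ | (∑ i, x i) = n ∧
          ∃ w : Fin m, ∀ i : Fin m, i ≠ w → x w + c + 1 ≤ x i}).ncard * (m * n - k) ^ k := by
      calc (n - k + 1) ^ k * (n + m - 1).choose (m - 1)
          ≤ (m * n - k) ^ k * (n - k + m - 1).choose (m - 1) :=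
            veto_main_ineq m n k hm hn2 hkn
        _ = (n - k + m - 1).choose (m - 1) * (m * n - k) ^ k := by ring
        _ ≤ _ := Nat.mul_le_mul_right _ (by
            have : (n - k + m - 1).choose (m - 1) = ((n - k) + m - 1).choose (m - 1) := rfl
            rw [this]
            exact hlb)
    exact_mod_cast hnat
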